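/- Let g ∈ ℝ^d lie in the range of Xᵀ for X ∈ ℝ^{n×d}, and let ε > 0. Then (g gᵀ + ε I_d)^{-1/2} g lies in the range of Xᵀ. -/

import Mathlib

open Matrix

/-- The square root of a positive semidefinite matrix, as defined in Mathlib of December 2024
(`Matrix.PosSemidef.sqrt`, since removed). -/
noncomputable def Matrix.PosSemidef.sqrt {n : Type*} [Fintype n] [DecidableEq n]
    {A : Matrix n n ℝ} (hA : A.PosSemidef) : Matrix n n ℝ :=
  hA.1.eigenvectorUnitary.1 * diagonal ((↑) ∘ (√·) ∘ hA.1.eigenvalues) *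
  (star hA.1.eigenvectorUnitary : Matrix n n ℝ)

lemma Matrix.PosSemidef.sqrt_mul_self {d : ℕ} {B : Matrix (Fin d) (Fin d) ℝ} (hA : B.PosSemidef) :
    hA.sqrt * hA.sqrt = B := by
  have hU : (star hA.1.eigenvectorUnitary : Matrix (Fin d) (Fin d) ℝ) * hA.1.eigenvectorUnitary.1 = 1 :=
    Matrix.UnitaryGroup.star_mul_self _
  have hspec := hA.1.spectral_theorem
  conv_rhs => rw [hspec]
  rw [Unitary.conjStarAlgAut_apply]
  simp only [Matrix.PosSemidef.sqrt]
  rw [show ∀ P Q R : Matrix (Fin d) (Fin d) ℝ, P * Q * R * (P * Q * R) = P * Q * (R * P) * Q * R from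
    fun P Q R => by simp only [Matrix.mul_assoc], hU, Matrix.mul_one,
    Matrix.mul_assoc _ (diagonal _) (diagonal _), diagonal_mul_diagonal]
  congr 3
  funext i
  simp [Real.mul_self_sqrt (hA.eigenvalues_nonneg i)]

lemma Matrix.PosSemidef.posSemidef_sqrt {d : ℕ} {B : Matrix (Fin d) (Fin d) ℝ} (hA : B.PosSemidef) :
    hA.sqrt.PosSemidef := by
  have h := (posSemidef_diagonal_iff.mpr (fun i => Real.sqrt_nonneg (hA.1.eigenvalues i)) :
    (diagonal ((↑) ∘ (√·) ∘ hA.1.eigenvalues) : Matrix (Fin d) (Fin d) ℝ).PosSemidef).mul_mul_conjTranspose_same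
    (hA.1.eigenvectorUnitary.1)
  simpa [Matrix.PosSemidef.sqrt, star_eq_conjTranspose] using h

lemma smul_one_posDef {d : ℕ} {t : ℝ} (ht : 0 < t) :
    (t • (1 : Matrix (Fin d) (Fin d) ℝ)).PosDef := by
  rw [Matrix.smul_one_eq_diagonal]
  exact Matrix.posDef_diagonal_iff.mpr fun _ => ht

lemma vecMulVec_mulVec' {d : ℕ} (g v : Fin d → ℝ) :
    vecMulVec g g *ᵥ v = (g ⬝ᵥ v) • g := by
  funext i
  simp [mulVec, dotProduct, vecMulVec_apply, Finset.mul_sum, mul_comm, mul_left_comm]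

theorem stmt_10 (n d : ℕ)
    (X : Matrix (Fin n) (Fin d) ℝ) (g : Fin d → ℝ)
    (α : Fin n → ℝ) (hg : g = Xᵀ *ᵥ α)
    (ε : ℝ) (hε : 0 < ε)
    (hA : ((vecMulVec g g + ε • (1 : Matrix (Fin d) (Fin d) ℝ))⁻¹).PosSemidef) :
    ∃ β : Fin n → ℝ, hA.sqrt *ᵥ g = Xᵀ *ᵥ β := by
  set A : Matrix (Fin d) (Fin d) ℝ := vecMulVec g g + ε • 1 with hAdef
  set c : ℝ := g ⬝ᵥ g + ε with hcdef
  have hgg : 0 ≤ g ⬝ᵥ g := Finset.sum_nonneg fun i _ => mul_self_nonneg _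
  have hc0 : 0 < c := add_pos_of_nonneg_of_pos hgg hε
  -- A is positive definite
  have hvv : (vecMulVec g g).PosSemidef := by
    simpa using posSemidef_vecMulVec_self_star g
  have hApd : A.PosDef := Matrix.PosDef.posSemidef_add hvv (smul_one_posDef hε)
  have hAunit : IsUnit A := hApd.isUnit
  have := hAunit.invertible
  -- A *ᵥ g = c • g
  have hAg : A *ᵥ g = c • g := by
    rw [hAdef, add_mulVec, vecMulVec_mulVec', smul_mulVec, one_mulVec, hcdef,
      add_smul]
  -- A⁻¹ *ᵥ g = c⁻¹ • g
  have hinvg : A⁻¹ *ᵥ g = c⁻¹ • g := by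
    have h1 : A⁻¹ *ᵥ (A *ᵥ g) = g := by
      rw [mulVec_mulVec, nonsing_inv_mul A ((Matrix.isUnit_iff_isUnit_det A).mp hAunit), one_mulVec]
    rw [hAg, mulVec_smul] at h1
    calc A⁻¹ *ᵥ g = c⁻¹ • (c • (A⁻¹ *ᵥ g)) := by
          rw [smul_smul, inv_mul_cancel₀ hc0.ne', one_smul]
      _ = c⁻¹ • g := by rw [h1]
  set S := hA.sqrt with hSdef
  have hS2 : S * S = A⁻¹ := hA.sqrt_mul_self
  set t : ℝ := Real.sqrt c⁻¹ with htdef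
  have ht0 : 0 < t := Real.sqrt_pos.mpr (inv_pos.mpr hc0)
  have ht2 : t * t = c⁻¹ := Real.mul_self_sqrt (inv_pos.mpr hc0).le
  -- key cancellation
  have key : (S + t • 1) *ᵥ (S *ᵥ g - t • g) = 0 := by
    rw [add_mulVec, mulVec_sub, mulVec_sub, mulVec_mulVec, hS2, hinvg,
      smul_mulVec, one_mulVec, mulVec_smul, smul_mulVec, one_mulVec,
      smul_smul, ht2]
    abel
  have hSpd : (S + t • 1).PosDef :=
    Matrix.PosDef.posSemidef_add hA.posSemidef_sqrt (smul_one_posDef ht0)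
  have hinj : Function.Injective ((S + t • 1) *ᵥ ·) :=
    Matrix.mulVec_injective_iff_isUnit.2 hSpd.isUnit
  have hzero : S *ᵥ g - t • g = 0 := by
    apply hinj
    simpa using key
  have hSg : S *ᵥ g = t • g := by
    rw [sub_eq_zero] at hzero; exact hzero
  exact ⟨t • α, by rw [hSg, hg, mulVec_smul]⟩
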